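/- Fix $0<c<1$, reals $\alpha>\alpha'>\max(3/2,\,1/c)$ and $\delta_0>\sqrt2$. There exist constants $C$ and $n_0$ depending on $c$ (and $\alpha,\alpha',\delta_0$) such that for all $n\ge n_0$ and all $m\ge 2n$, $\sup\big\{\,\big|\mathbf\Delta((d,n),(\delta,m))\big| : d,\delta\ \text{positive integers with}\ d<\tfrac{\pi}{\sqrt{2\alpha}}\sqrt{\tfrac{n}{\log n}},\ \delta<\tfrac{\pi}{\delta_0\sqrt{2\alpha}}\sqrt{\tfrac{m}{\log m}}\big\} \le C\, n\Big(\tfrac{\log n}{n}\Big)^{1/(2c)}\Big(\tfrac{\log(m-n)}{m-n}\Big)^{1/2}$. -/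

import Mathlib

open MeasureTheory ProbabilityTheory Finset Real

noncomputable section

set_option linter.unusedSectionVars false

section AuxProb
variable {Ω : Type*} [MeasurableSpace Ω] (P : Measure Ω) [IsProbabilityMeasure P]

lemma measure_preimage_nat (X : Ω → ℕ) (hX : Measurable X) (E : Set ℕ) :
    P (X ⁻¹' E) = ∑' t, E.indicator (fun t => P (X ⁻¹' {t})) t := by
  classical
  have hE : X ⁻¹' E = ⋃ t, X ⁻¹' ({t} ∩ E) := by
    ext ω; simp [Set.mem_iUnion]
  rw [hE, measure_iUnion]
  · refine tsum_congr fun t => ?_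
    by_cases ht : t ∈ E
    · rw [Set.indicator_of_mem ht, Set.inter_eq_left.2 (by simpa using ht)]
    · rw [Set.indicator_of_notMem ht]
      have : ({t} : Set ℕ) ∩ E = ∅ := by
        ext x; simp only [Set.mem_inter_iff, Set.mem_singleton_iff, Set.mem_empty_iff_false,
          iff_false]
        rintro ⟨rfl, h⟩; exact ht h
      simp [this]
  · intro i j hij
    refine Set.disjoint_left.2 fun ω hi hj => hij ?_
    have h1 : X ω = i := hi.1
    have h2 : X ω = j := hj.1
    rw [← h1, h2]
  · intro t; exact hX MeasurableSet.of_discrete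

lemma measure_joint (X Y : Ω → ℕ) (hX : Measurable X) (hY : Measurable Y)
    (h : IndepFun X Y P) (R : ℕ → ℕ → Prop) :
    P {ω | R (X ω) (Y ω)} = ∑' k, P (X ⁻¹' {k}) * P (Y ⁻¹' {t | R k t}) := by
  have hE : {ω | R (X ω) (Y ω)} = ⋃ k, (X ⁻¹' {k} ∩ Y ⁻¹' {t | R k t}) := by
    ext ω; simp [Set.mem_iUnion]
  rw [hE, measure_iUnion]
  · exact tsum_congr fun k =>
      h.measure_inter_preimage_eq_mul _ _ MeasurableSet.of_discrete MeasurableSet.of_discrete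
  · intro i j hij
    refine Set.disjoint_left.2 fun ω hi hj => hij ?_
    have h1 : X ω = i := hi.1
    have h2 : X ω = j := hj.1
    rw [← h1, h2]
  · intro k
    exact (hX MeasurableSet.of_discrete).inter (hY MeasurableSet.of_discrete)


lemma bern_sum_law (b : ℕ → Ω → ℕ) (hmeas : ∀ i, Measurable (b i))
    (hindep : iIndepFun b P)
    (h0 : ∀ i, P {ω | b i ω = 0} = 1/2) (h1 : ∀ i, P {ω | b i ω = 1} = 1/2)
    (s : Finset ℕ) : ∀ (k : ℕ),
    P ((fun ω => ∑ i ∈ s, b i ω) ⁻¹' {k}) = (s.card.choose k : ENNReal) * 2⁻¹ ^ s.card := by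
  classical
  induction s using Finset.induction_on with
  | empty =>
      intro k
      cases k with
      | zero => simp
      | succ k => simp [Set.preimage, Set.eq_empty_iff_forall_notMem]
  | @insert j s hj ih =>
      intro k
      set X : Ω → ℕ := fun ω => ∑ i ∈ s, b i ω with hX
      have hXmeas : Measurable X := Finset.measurable_sum s fun i _ => hmeas i
      have hI : IndepFun X (b j) P := by
        have := hindep.indepFun_finset_sum_of_notMem hmeas hj
        have he : (∑ i ∈ s, b i) = X := by ext ω; simp [hX, Finset.sum_apply]
        rwa [he] at this
      have hA0 : P (b j ⁻¹' {0}) = 1/2 := by rw [← h0 j]; rfl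
      have hA1 : P (b j ⁻¹' {1}) = 1/2 := by rw [← h1 j]; rfl
      have hd01 : Disjoint (b j ⁻¹' {0}) (b j ⁻¹' {1}) := by
        refine Set.disjoint_left.2 fun ω hω0 hω1 => ?_
        have e0 : b j ω = 0 := hω0
        have e1 : b j ω = 1 := hω1
        exact absurd (e0 ▸ e1) (by simp)
      have hmeas01 : MeasurableSet (b j ⁻¹' {0} ∪ b j ⁻¹' {1}) :=
        ((hmeas j) MeasurableSet.of_discrete).union ((hmeas j) MeasurableSet.of_discrete)
      have hcompl : P ((b j ⁻¹' {0} ∪ b j ⁻¹' {1})ᶜ) = 0 := by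
        rw [measure_compl hmeas01 (measure_ne_top _ _),
          measure_union hd01 ((hmeas j) MeasurableSet.of_discrete), hA0, hA1]
        rw [measure_univ]
        have h12 : (1:ENNReal)/2 + 1/2 = 1 := by
          rw [ENNReal.div_add_div_same, (by norm_num : (1:ENNReal)+1 = 2),
            ENNReal.div_self (by norm_num) (by norm_num)]
        rw [h12, tsub_self]
      set E : Set Ω := (fun ω => ∑ i ∈ insert j s, b i ω) ⁻¹' {k} with hE
      have hEmem : ∀ ω, ω ∈ E ↔ b j ω + X ω = k := by
        intro ω
        simp only [hE, Set.mem_preimage, Set.mem_singleton_iff, hX]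
        rw [Finset.sum_insert hj]
      have hEmeas : MeasurableSet E :=
        (Finset.measurable_sum _ fun i _ => hmeas i) MeasurableSet.of_discrete
      have hsplit : P E = P (E ∩ b j ⁻¹' {0}) + P (E ∩ b j ⁻¹' {1}) := by
        have h1' : P E = P (E ∩ (b j ⁻¹' {0} ∪ b j ⁻¹' {1})) := by
          refine le_antisymm ?_ (measure_mono Set.inter_subset_left)
          calc P E ≤ P (E ∩ (b j ⁻¹' {0} ∪ b j ⁻¹' {1}))
                + P (E \ (b j ⁻¹' {0} ∪ b j ⁻¹' {1})) := by
                  rw [measure_inter_add_diff E hmeas01]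
            _ ≤ P (E ∩ (b j ⁻¹' {0} ∪ b j ⁻¹' {1})) + 0 := by
                  gcongr
                  refine le_trans (measure_mono ?_) (le_of_eq hcompl)
                  exact fun ω hω => hω.2
            _ = _ := add_zero _
        rw [h1', Set.inter_union_distrib_left,
          measure_union (hd01.mono Set.inter_subset_right Set.inter_subset_right)
            (hEmeas.inter ((hmeas j) MeasurableSet.of_discrete))]
      have hE0 : E ∩ b j ⁻¹' {0} = X ⁻¹' {k} ∩ b j ⁻¹' {0} := by
        ext ω
        simp only [Set.mem_inter_iff, Set.mem_preimage, Set.mem_singleton_iff, hEmem ω,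
          Set.mem_preimage, Set.mem_singleton_iff]
        constructor
        · rintro ⟨h, hb⟩; rw [hb, zero_add] at h; exact ⟨h, hb⟩
        · rintro ⟨h, hb⟩; refine ⟨?_, hb⟩; rw [hb, zero_add]; exact h
      have hE1 : E ∩ b j ⁻¹' {1} = X ⁻¹' {t | 1 + t = k} ∩ b j ⁻¹' {1} := by
        ext ω
        simp only [Set.mem_inter_iff, Set.mem_preimage, Set.mem_singleton_iff, hEmem ω,
          Set.mem_setOf_eq]
        constructor
        · rintro ⟨h, hb⟩; rw [hb] at h; exact ⟨h, hb⟩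
        · rintro ⟨h, hb⟩; refine ⟨?_, hb⟩; rw [hb]; exact h
      have hP0 : P (E ∩ b j ⁻¹' {0}) = P (X ⁻¹' {k}) * 2⁻¹ := by
        rw [hE0, hI.measure_inter_preimage_eq_mul _ _ MeasurableSet.of_discrete
          MeasurableSet.of_discrete, hA0, one_div]
      have hP1 : P (E ∩ b j ⁻¹' {1}) = P (X ⁻¹' {t | 1 + t = k}) * 2⁻¹ := by
        rw [hE1, hI.measure_inter_preimage_eq_mul _ _ MeasurableSet.of_discrete
          MeasurableSet.of_discrete, hA1, one_div]
      rw [hsplit, hP0, hP1]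
      have hcard : (insert j s).card = s.card + 1 := Finset.card_insert_of_notMem hj
      cases k with
      | zero =>
          have hempty : ({t | 1 + t = 0} : Set ℕ) = ∅ := by
            ext t; simp
          rw [hempty, ih 0, hcard]
          simp [pow_succ]
      | succ k =>
          have hsingle : ({t | 1 + t = k + 1} : Set ℕ) = {k} := by
            ext t; simp [Nat.add_comm, Nat.succ_inj]
          rw [hsingle, ih (k+1), ih k, hcard, Nat.choose_succ_succ' (s.card) k]
          push_cast
          ring

lemma indep_block_sums (b : ℕ → Ω → ℕ) (hmeas : ∀ i, Measurable (b i))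
    (hindep : iIndepFun b P) (a c e : ℕ) :
    IndepFun (fun ω => ∑ i ∈ Finset.Ico a c, b i ω)
      (fun ω => ∑ i ∈ Finset.Ico c e, b i ω) P := by
  classical
  have h := hindep.indepFun_finset (Finset.Ico a c) (Finset.Ico c e)
    (Finset.Ico_disjoint_Ico_consecutive a c e) hmeas
  set φ : ({x // x ∈ Finset.Ico a c} → ℕ) → ℕ := fun v => ∑ i, v i with hφ
  set ψ : ({x // x ∈ Finset.Ico c e} → ℕ) → ℕ := fun v => ∑ i, v i with hψ
  have hφm : Measurable φ := Finset.measurable_sum _ fun i _ => measurable_pi_apply i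
  have hψm : Measurable ψ := Finset.measurable_sum _ fun i _ => measurable_pi_apply i
  have h2 := h.comp hφm hψm
  have e1 : (fun ω => ∑ i ∈ Finset.Ico a c, b i ω)
      = φ ∘ (fun ω (i : {x // x ∈ Finset.Ico a c}) => b i ω) :=
    funext fun ω => (Finset.sum_coe_sort _ (fun i => b i ω)).symm
  have e2 : (fun ω => ∑ i ∈ Finset.Ico c e, b i ω)
      = ψ ∘ (fun ω (i : {x // x ∈ Finset.Ico c e}) => b i ω) :=
    funext fun ω => (Finset.sum_coe_sort _ (fun i => b i ω)).symm
  rw [e1, e2]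
  exact h2

end AuxProb

lemma indicator_roots (δ : ℕ) (hδ : 0 < δ) (a : ℕ) :
    (∑ j ∈ Finset.range δ, Complex.exp ((2*π/δ : ℝ) * Complex.I) ^ (a*j))
      = if δ ∣ a then (δ:ℂ) else 0 := by
  set ω₀ : ℂ := Complex.exp ((2*π/δ : ℝ) * Complex.I) with hω₀
  have hδR : (δ:ℝ) ≠ 0 := Nat.cast_ne_zero.2 hδ.ne'
  have hpow : ∀ r : ℕ, ω₀ ^ r = Complex.exp (((2*π*r/δ : ℝ) : ℂ) * Complex.I) := by
    intro r
    rw [hω₀, ← Complex.exp_nat_mul]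
    congr 1
    push_cast
    ring
  have key : ∀ j, ω₀ ^ (a*j) = (ω₀ ^ a) ^ j := fun j => pow_mul ω₀ a j
  simp only [key]
  by_cases hdvd : δ ∣ a
  · obtain ⟨q, rfl⟩ := hdvd
    have h1 : ω₀ ^ (δ*q) = 1 := by
      rw [hpow, Complex.exp_eq_one_iff]
      refine ⟨(q:ℤ), ?_⟩
      have hr : (2*π*(δ*q:ℕ)/δ : ℝ) = (q:ℝ) * (2*π) := by
        push_cast
        field_simp
      rw [hr]
      push_cast
      ring
    simp [h1, if_pos (Dvd.intro q rfl)]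
  · have h1 : ω₀ ^ a ≠ 1 := by
      rw [hpow, Ne, Complex.exp_eq_one_iff]
      rintro ⟨n, hn⟩
      have hC : ((2*π*a/δ : ℝ) : ℂ) = ((n * (2*π) : ℝ) : ℂ) := by
        rw [show ((n:ℂ)) * (2*↑π*Complex.I) = (((n:ℝ) * (2*π) : ℝ):ℂ) * Complex.I by
          push_cast; ring] at hn
        exact mul_right_cancel₀ Complex.I_ne_zero hn
      have hRe : (2*π*a/δ : ℝ) = (n:ℝ) * (2*π) := by exact_mod_cast hC
      have h2 : (2*π) * ((a:ℝ)/δ) = (2*π) * (n:ℝ) := by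
        linear_combination hRe
      have h3 : (a:ℝ)/δ = (n:ℝ) := mul_left_cancel₀ (by positivity) h2
      have h4 : (a:ℝ) = (δ:ℝ) * (n:ℝ) := by
        rw [div_eq_iff hδR] at h3; rw [h3]; ring
      have h5 : (a:ℤ) = (δ:ℤ) * n := by exact_mod_cast h4
      exact hdvd (Int.natCast_dvd_natCast.mp ⟨n, h5⟩)
    have hz : (ω₀^a)^δ = 1 := by
      rw [← pow_mul, hpow, Complex.exp_eq_one_iff]
      refine ⟨(a:ℤ), ?_⟩
      have hr : (2*π*(a*δ:ℕ)/δ : ℝ) = (a:ℝ) * (2*π) := by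
        push_cast
        field_simp
      rw [hr]
      push_cast
      ring
    rw [geom_sum_eq h1 δ, hz, if_neg hdvd]
    simp

lemma fourier_bound (δ N k : ℕ) (hδ : 2 ≤ δ) :
    |(∑ t ∈ Finset.range (N+1), if δ ∣ k + t then ((N.choose t : ℝ) * 2⁻¹ ^ N) else 0) - 1/δ|
      ≤ Real.cos (π/δ) ^ N := by
  have hδ0 : 0 < δ := by omega
  have hδC : (δ:ℂ) ≠ 0 := Nat.cast_ne_zero.2 hδ0.ne'
  set ω₀ : ℂ := Complex.exp ((2*π/δ : ℝ) * Complex.I) with hω₀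
  have hpow : ∀ r : ℕ, ω₀ ^ r = Complex.exp (((2*π*r/δ : ℝ) : ℂ) * Complex.I) := by
    intro r
    rw [hω₀, ← Complex.exp_nat_mul]
    congr 1
    push_cast
    ring
  set L : ℝ := ∑ t ∈ Finset.range (N+1), if δ ∣ k + t then ((N.choose t : ℝ) * 2⁻¹ ^ N) else 0
    with hL
  have hC : (L : ℂ) = (δ:ℂ)⁻¹ * ∑ j ∈ Finset.range δ, ω₀^(k*j) * ((1 + ω₀^j)/2)^N := by
    have step1 : (L : ℂ) = ∑ t ∈ Finset.range (N+1),
        (N.choose t : ℂ) * 2⁻¹^N * ((δ:ℂ)⁻¹ * ∑ j ∈ Finset.range δ, ω₀^((k+t)*j)) := by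
      rw [hL]
      push_cast [apply_ite (fun x : ℝ => (x : ℂ))]
      refine Finset.sum_congr rfl fun t _ => ?_
      rw [indicator_roots δ hδ0 (k+t)]
      by_cases h : δ ∣ k+t
      · rw [if_pos h, if_pos h]
        field_simp
      · rw [if_neg h, if_neg h]
        simp
    rw [step1]
    have step2 : ∀ t ∈ Finset.range (N+1),
        (N.choose t : ℂ) * 2⁻¹^N * ((δ:ℂ)⁻¹ * ∑ j ∈ Finset.range δ, ω₀^((k+t)*j))
          = ∑ j ∈ Finset.range δ, (δ:ℂ)⁻¹ * ((N.choose t : ℂ) * 2⁻¹^N * ω₀^((k+t)*j)) := by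
      intro t _
      rw [Finset.mul_sum, Finset.mul_sum]
      exact Finset.sum_congr rfl fun j _ => by ring
    rw [Finset.sum_congr rfl step2, Finset.sum_comm, Finset.mul_sum]
    refine Finset.sum_congr rfl fun j _ => ?_
    rw [← Finset.mul_sum]
    congr 1
    have hsplit : ∀ t, ω₀^((k+t)*j) = ω₀^(k*j) * (ω₀^j)^t := by
      intro t
      rw [← pow_mul, ← pow_add]
      congr 1
      ring
    simp_rw [hsplit]
    have hbin : ∑ t ∈ Finset.range (N+1), (N.choose t : ℂ) * (ω₀^j)^t = (ω₀^j + 1)^N := by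
      rw [add_pow (ω₀^j) 1 N]
      refine Finset.sum_congr rfl fun t _ => ?_
      ring
    calc ∑ t ∈ Finset.range (N+1), (N.choose t : ℂ) * 2⁻¹^N * (ω₀^(k*j) * (ω₀^j)^t)
        = ω₀^(k*j) * 2⁻¹^N * ∑ t ∈ Finset.range (N+1), (N.choose t : ℂ) * (ω₀^j)^t := by
          rw [Finset.mul_sum]
          exact Finset.sum_congr rfl fun t _ => by ring
      _ = ω₀^(k*j) * ((1 + ω₀^j)/2)^N := by
          rw [hbin, div_pow, div_eq_mul_inv _ ((2:ℂ)^N), ← inv_pow]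
          ring
  -- split off j = 0
  have hsplit0 : ∑ j ∈ Finset.range δ, ω₀^(k*j) * ((1 + ω₀^j)/2)^N
      = 1 + ∑ j ∈ Finset.Ico 1 δ, ω₀^(k*j) * ((1 + ω₀^j)/2)^N := by
    rw [Finset.range_eq_Ico, Finset.sum_eq_sum_Ico_succ_bot hδ0]
    norm_num
  have hdiff : (L : ℂ) - (δ:ℂ)⁻¹
      = (δ:ℂ)⁻¹ * ∑ j ∈ Finset.Ico 1 δ, ω₀^(k*j) * ((1 + ω₀^j)/2)^N := by
    rw [hC, hsplit0, mul_add, mul_one]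
    ring
  -- norm computations
  have habs_exp : ∀ x : ℝ, ‖Complex.exp ((x:ℂ) * Complex.I)‖ = 1 := by
    intro x
    rw [Complex.norm_exp]
    simp
  have habs_pow : ∀ r : ℕ, ‖ω₀ ^ r‖ = 1 := fun r => by rw [hpow]; exact habs_exp _
  have hπδ : 0 < π/δ := by positivity
  have hπδ2 : π/δ ≤ π/2 := by
    apply div_le_div_of_nonneg_left Real.pi_pos.le (by norm_num)
    exact_mod_cast hδ
  have hcos0 : (0:ℝ) ≤ Real.cos (π/δ) := by
    apply Real.cos_nonneg_of_mem_Icc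
    constructor
    · linarith
    · linarith
  have hpsi : ∀ j ∈ Finset.Ico 1 δ, ‖(1 + ω₀^j)/2‖ ≤ Real.cos (π/δ) := by
    intro j hj
    rw [Finset.mem_Ico] at hj
    set θ : ℝ := π*j/δ with hθ
    have hωj : ω₀^j = Complex.exp (((2*θ : ℝ):ℂ) * Complex.I) := by
      rw [hθ, hpow]
      congr 1
      push_cast
      ring
    have hfact : 1 + ω₀^j = Complex.exp ((θ:ℂ) * Complex.I) * (2 * Complex.cos (θ:ℂ)) := by
      rw [hωj, Complex.two_cos, mul_add, ← Complex.exp_add, ← Complex.exp_add]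
      have e1 : (θ:ℂ)*Complex.I + (θ:ℂ)*Complex.I = ((2*θ:ℝ):ℂ)*Complex.I := by
        push_cast
        ring
      have e2 : (θ:ℂ)*Complex.I + -(θ:ℂ)*Complex.I = 0 := by ring
      rw [e1, e2, Complex.exp_zero]
      ring
    have habs1 : ‖(1 + ω₀^j)/2‖ = |Real.cos θ| := by
      rw [hfact, norm_div, norm_mul, norm_mul, habs_exp θ, ← Complex.ofReal_cos,
        Complex.norm_real]
      simp
    rw [habs1]
    have hj1 : (1:ℝ) ≤ (j:ℝ) := by exact_mod_cast hj.1
    have hjδ : (j:ℝ) ≤ (δ:ℝ) - 1 := by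
      have : (j:ℝ) + 1 ≤ (δ:ℝ) := by exact_mod_cast hj.2
      linarith
    have hδpos : (0:ℝ) < (δ:ℝ) := by exact_mod_cast hδ0
    have hθlb : π/δ ≤ θ := by
      rw [hθ]
      rw [div_le_div_iff₀ hδpos hδpos]
      nlinarith [mul_nonneg (mul_pos Real.pi_pos hδpos).le (sub_nonneg.2 hj1)]
    have hθub : θ ≤ π - π/δ := by
      rw [hθ]
      have h1 : π*(j:ℝ)/δ ≤ π*((δ:ℝ)-1)/δ := by
        gcongr
      have h2 : π*((δ:ℝ)-1)/δ = π - π/δ := by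
        field_simp
      linarith
    have hθ0 : 0 ≤ θ := by positivity
    have hθπ : θ ≤ π := by linarith
    rw [abs_le]
    constructor
    · rw [← Real.cos_pi_sub]
      apply Real.cos_le_cos_of_nonneg_of_le_pi hθ0 (by linarith) hθub
    · apply Real.cos_le_cos_of_nonneg_of_le_pi hπδ.le hθπ hθlb
  have hcast : ((L - 1/δ : ℝ) : ℂ) = (L:ℂ) - (δ:ℂ)⁻¹ := by
    push_cast
    ring
  have hcard : ((Finset.Ico 1 δ).card : ℝ) ≤ (δ:ℝ) := by
    rw [Nat.card_Ico]
    exact_mod_cast Nat.sub_le δ 1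
  calc |L - 1/δ| = ‖(L:ℂ) - (δ:ℂ)⁻¹‖ := by rw [← hcast, Complex.norm_real, Real.norm_eq_abs]
    _ = ‖(δ:ℂ)⁻¹‖ * ‖∑ j ∈ Finset.Ico 1 δ,
          ω₀^(k*j) * ((1 + ω₀^j)/2)^N‖ := by rw [hdiff, norm_mul]
    _ ≤ (δ:ℝ)⁻¹ * ∑ j ∈ Finset.Ico 1 δ, Real.cos (π/δ) ^ N := by
        rw [norm_inv, Complex.norm_natCast]
        apply mul_le_mul_of_nonneg_left ?_ (by positivity)
        refine le_trans (norm_sum_le _ _) (Finset.sum_le_sum fun j hj => ?_)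
        rw [norm_mul, habs_pow (k*j), one_mul, norm_pow]
        exact pow_le_pow_left₀ (norm_nonneg _) (hpsi j hj) N
    _ ≤ Real.cos (π/δ) ^ N := by
        rw [Finset.sum_const, nsmul_eq_mul]
        have hpow0 : (0:ℝ) ≤ Real.cos (π/δ) ^ N := by positivity
        have hδinv : (δ:ℝ)⁻¹ * ((Finset.Ico 1 δ).card : ℝ) ≤ 1 := by
          rw [inv_mul_le_iff₀ (by exact_mod_cast hδ0 : (0:ℝ) < (δ:ℝ)), mul_one]
          exact hcard
        calc (δ:ℝ)⁻¹ * (((Finset.Ico 1 δ).card : ℝ) * Real.cos (π/δ) ^ N)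
            = ((δ:ℝ)⁻¹ * ((Finset.Ico 1 δ).card : ℝ)) * Real.cos (π/δ) ^ N := by ring
          _ ≤ 1 * Real.cos (π/δ) ^ N := mul_le_mul_of_nonneg_right hδinv hpow0
          _ = _ := one_mul _

lemma cos_quarter {x : ℝ} (hx0 : 0 ≤ x) (hx : x ≤ π/2) : Real.cos x ≤ 1 - x^2/4 := by
  rcases eq_or_lt_of_le hx0 with h|h
  · rw [← h]
    simp
  have hπ4 : π ≤ 4 := by linarith [Real.pi_le_four]
  have ht0 : 0 < x/2 := by linarith
  have ht1 : x/2 ≤ 1 := by linarith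
  have ht4 : x/2 ≤ π/4 := by linarith
  have hsin0 : x/2 * (1 - π^2/64) ≤ x/2 - (x/2)^3/4 := by
    have hsq : (x/2)^2 ≤ π^2/16 := by nlinarith
    nlinarith
  have hsin : x/2 * (1 - π^2/64) ≤ Real.sin (x/2) := by
    have := Real.sin_gt_sub_cube ht0
    nlinarith
  have hconst : (0:ℝ) < 1 - π^2/64 := by nlinarith [Real.pi_lt_d2]
  have hsq2 : (x/2)^2/2 ≤ Real.sin (x/2)^2 := by
    have h1 : (x/2 * (1 - π^2/64))^2 ≤ Real.sin (x/2)^2 := by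
      apply sq_le_sq'
      · nlinarith
      · exact hsin
    have h2 : (x/2)^2/2 ≤ (x/2 * (1 - π^2/64))^2 := by
      have : (1:ℝ)/2 ≤ (1 - π^2/64)^2 := by nlinarith [Real.pi_lt_d2, Real.pi_pos]
      nlinarith [sq_nonneg (x/2)]
    linarith
  have hcos : Real.cos x = 1 - 2*Real.sin (x/2)^2 := by
    have h2 := Real.cos_two_mul (x/2)
    rw [show 2*(x/2) = x by ring] at h2
    have h3 := Real.sin_sq_add_cos_sq (x/2)
    linarith
  nlinarith [hsq2, hcos]

lemma corr_alg (F : Finset ℕ) (p q : ℕ → ℝ) (χ : ℕ → Prop) [DecidablePred χ] (μ₀ ε : ℝ)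
    (hε : 0 ≤ ε) (hp : ∀ k, 0 ≤ p k) (hq : ∀ k ∈ F, |q k - μ₀| ≤ ε)
    (hsum : ∑ k ∈ F, p k = 1) :
    |∑ k ∈ F, (if χ k then p k * q k else 0)
      - (∑ k ∈ F, if χ k then p k else 0) * (∑ k ∈ F, p k * q k)| ≤ 2 * ε := by
  classical
  set J := ∑ k ∈ F, (if χ k then p k * q k else 0) with hJ
  set A := ∑ k ∈ F, (if χ k then p k else 0) with hA
  set Bv := ∑ k ∈ F, p k * q k with hBv
  have hA0 : 0 ≤ A := Finset.sum_nonneg fun k _ => by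
    split_ifs
    · exact hp k
    · exact le_rfl
  have hA1 : A ≤ 1 := by
    rw [← hsum, hA]
    refine Finset.sum_le_sum fun k _ => ?_
    split_ifs
    · exact le_rfl
    · exact hp k
  have h1 : |J - A*μ₀| ≤ ε := by
    have he : J - A*μ₀ = ∑ k ∈ F, (if χ k then p k * (q k - μ₀) else 0) := by
      rw [hJ, hA, Finset.sum_mul, ← Finset.sum_sub_distrib]
      refine Finset.sum_congr rfl fun k _ => ?_
      split_ifs
      · ring
      · ring
    rw [he]
    calc |∑ k ∈ F, (if χ k then p k * (q k - μ₀) else 0)|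
        ≤ ∑ k ∈ F, |if χ k then p k * (q k - μ₀) else 0| := Finset.abs_sum_le_sum_abs _ _
      _ ≤ ∑ k ∈ F, p k * ε := by
          refine Finset.sum_le_sum fun k hk => ?_
          split_ifs
          · rw [abs_mul, abs_of_nonneg (hp k)]
            exact mul_le_mul_of_nonneg_left (hq k hk) (hp k)
          · simp only [abs_zero]
            exact mul_nonneg (hp k) hε
      _ = ε := by rw [← Finset.sum_mul, hsum, one_mul]
  have h2 : |Bv - μ₀| ≤ ε := by
    have he : Bv - μ₀ = ∑ k ∈ F, p k * (q k - μ₀) := by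
      have : (∑ k ∈ F, p k * (q k - μ₀)) = Bv - (∑ k ∈ F, p k) * μ₀ := by
        rw [hBv, Finset.sum_mul, ← Finset.sum_sub_distrib]
        exact Finset.sum_congr rfl fun k _ => by ring
      rw [this, hsum, one_mul]
    rw [he]
    calc |∑ k ∈ F, p k * (q k - μ₀)| ≤ ∑ k ∈ F, |p k * (q k - μ₀)| :=
          Finset.abs_sum_le_sum_abs _ _
      _ ≤ ∑ k ∈ F, p k * ε := by
          refine Finset.sum_le_sum fun k hk => ?_
          rw [abs_mul, abs_of_nonneg (hp k)]
          exact mul_le_mul_of_nonneg_left (hq k hk) (hp k)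
      _ = ε := by rw [← Finset.sum_mul, hsum, one_mul]
  calc |J - A * Bv| = |(J - A*μ₀) + A*(μ₀ - Bv)| := by ring_nf
    _ ≤ |J - A*μ₀| + |A*(μ₀ - Bv)| := abs_add_le _ _
    _ = |J - A*μ₀| + A * |μ₀ - Bv| := by rw [abs_mul, abs_of_nonneg hA0]
    _ ≤ ε + 1 * ε := by
        have hμB : |μ₀ - Bv| ≤ ε := by rw [abs_sub_comm]; exact h2
        have : A * |μ₀ - Bv| ≤ 1 * ε := by
          apply mul_le_mul hA1 hμB (abs_nonneg _) (by norm_num)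
        linarith [h1]
    _ = 2 * ε := by ring


lemma exponent_key {α δ₀ : ℝ} {δ N m : ℕ} (hαpos : 0 < α) (hδ₀sq : 2 ≤ δ₀^2)
    (hδ₀pos : 0 < δ₀) (hδR : 0 < (δ:ℝ)) (hlogm1 : 1 ≤ Real.log m) (hm0 : 0 < (m:ℝ))
    (hNhalf : (m:ℝ)/2 ≤ (N:ℝ))
    (hδlt : (δ:ℝ) < π / (δ₀ * Real.sqrt (2 * α)) * Real.sqrt ((m : ℝ) / Real.log m)) :
    (α/2) * Real.log m ≤ (N:ℝ) * ((π/(δ:ℝ))^2/4) := by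
  have hlogm0 : (0:ℝ) < Real.log m := by linarith
  have hs2 : Real.sqrt (2*α) ^ 2 = 2*α := Real.sq_sqrt (by linarith)
  have hs0 : 0 < Real.sqrt (2*α) := Real.sqrt_pos.2 (by linarith)
  have hmlog0 : 0 ≤ (m:ℝ)/Real.log m := by positivity
  have hsq : (δ:ℝ)^2 < π^2/(δ₀^2*(2*α)) * ((m:ℝ)/Real.log m) := by
    have h := pow_lt_pow_left₀ hδlt (le_of_lt hδR) (by norm_num : 2 ≠ 0)
    calc (δ:ℝ)^2 < (π / (δ₀ * Real.sqrt (2*α)) * Real.sqrt ((m:ℝ)/Real.log m))^2 := h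
      _ = π^2/(δ₀^2*(2*α)) * ((m:ℝ)/Real.log m) := by
          rw [mul_pow, div_pow, mul_pow, hs2, Real.sq_sqrt hmlog0]
  have hmul : (δ:ℝ)^2 * (2*α) * Real.log m < π^2 * m / δ₀^2 := by
    have h2 := mul_lt_mul_of_pos_right hsq (by positivity : (0:ℝ) < (2*α) * Real.log m)
    calc (δ:ℝ)^2 * (2*α) * Real.log m
        = (δ:ℝ)^2 * ((2*α) * Real.log m) := by ring
      _ < π^2/(δ₀^2*(2*α)) * ((m:ℝ)/Real.log m) * ((2*α) * Real.log m) := h2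
      _ = π^2 * m / δ₀^2 := by
          field_simp
  have hδ₀div : π^2 * m / δ₀^2 ≤ π^2 * m / 2 := by
    apply div_le_div_of_nonneg_left (by positivity) (by norm_num) hδ₀sq
  have hfinal : (δ:ℝ)^2 * (2*α) * Real.log m ≤ π^2 * (N:ℝ) := by
    have : π^2 * m / 2 ≤ π^2 * N := by nlinarith [sq_nonneg π]
    linarith
  rw [div_pow]
  rw [show (N:ℝ) * (π^2/(δ:ℝ)^2/4) = (N:ℝ) * π^2 / ((δ:ℝ)^2 * 4) by ring]
  rw [le_div_iff₀ (by positivity)]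
  nlinarith [hfinal]

lemma final_compare {c α : ℝ} {n m N : ℕ} (hc0 : 0 < c) (hα32 : 3/2 < α) (hα1c : 1/c < α)
    (hn1 : 1 ≤ (n:ℝ)) (hn0 : 0 < (n:ℝ)) (hm0 : 0 < (m:ℝ)) (hN0 : 0 < (N:ℝ))
    (hnm : (n:ℝ) ≤ m) (hNm : (N:ℝ) ≤ m)
    (hlogn1 : 1 ≤ Real.log n) (hlogN1 : 1 ≤ Real.log N) :
    (m:ℝ) ^ (-(α/2))
      ≤ (n:ℝ) * (Real.log n/(n:ℝ)) ^ (1/(2*c)) * (Real.log N/(N:ℝ)) ^ ((1:ℝ)/2) := by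
  have h2c0 : (0:ℝ) < 1/(2*c) := by positivity
  set u : ℝ := 1/(n:ℝ) with hudef
  set v : ℝ := 1/(m:ℝ) with hvdef
  set w : ℝ := 1/(N:ℝ) with hwdef
  have hu0 : 0 < u := by positivity
  have hv0 : 0 < v := by positivity
  have hw0 : 0 < w := by positivity
  have hu1 : u ≤ 1 := by
    rw [hudef, div_le_one hn0]
    exact hn1
  have hvu : v ≤ u := by
    rw [hudef, hvdef]
    apply one_div_le_one_div_of_le hn0 hnm
  have hvw : v ≤ w := by
    rw [hvdef, hwdef]
    apply one_div_le_one_div_of_le hN0 hNm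
  have e1 : (m:ℝ) ^ (-(α/2)) = v ^ (α/2) := by
    rw [hvdef, Real.rpow_neg hm0.le, one_div, ← Real.inv_rpow hm0.le]
  have e2 : v ^ (α/2) = v ^ ((1:ℝ)/2) * v ^ ((α-1)/2) := by
    rw [← Real.rpow_add hv0]
    congr 1
    ring
  have i1 : v ^ ((α-1)/2) ≤ u ^ ((α-1)/2) :=
    Real.rpow_le_rpow hv0.le hvu (by linarith)
  have hexpineq : 1/(2*c) - 1 ≤ (α-1)/2 := by
    have hhalf : 1/(2*c) = (1/c)/2 := by
      rw [div_div]
      congr 1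
      ring
    rw [hhalf]
    linarith
  have i2 : u ^ ((α-1)/2) ≤ u ^ (1/(2*c) - 1) :=
    Real.rpow_le_rpow_of_exponent_ge hu0 hu1 hexpineq
  have e3 : u ^ (1/(2*c) - 1) = (n:ℝ) * u ^ (1/(2*c)) := by
    rw [Real.rpow_sub hu0, Real.rpow_one, hudef]
    rw [div_div_eq_mul_div]
    ring
  have i3 : u ^ (1/(2*c)) ≤ (Real.log n/(n:ℝ)) ^ (1/(2*c)) := by
    apply Real.rpow_le_rpow hu0.le ?_ h2c0.le
    rw [hudef]
    gcongr
  have i4 : v ^ ((1:ℝ)/2) ≤ w ^ ((1:ℝ)/2) :=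
    Real.rpow_le_rpow hv0.le hvw (by norm_num)
  have i5 : w ^ ((1:ℝ)/2) ≤ (Real.log N/(N:ℝ)) ^ ((1:ℝ)/2) := by
    apply Real.rpow_le_rpow hw0.le ?_ (by norm_num)
    rw [hwdef]
    gcongr
  calc (m:ℝ) ^ (-(α/2)) = v ^ ((1:ℝ)/2) * v ^ ((α-1)/2) := by rw [e1, e2]
    _ ≤ (Real.log N/(N:ℝ)) ^ ((1:ℝ)/2) * ((n:ℝ) * (Real.log n/(n:ℝ)) ^ (1/(2*c))) := by
        apply mul_le_mul (le_trans i4 i5) ?_ (Real.rpow_nonneg hv0.le _) (by positivity)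
        calc v ^ ((α-1)/2) ≤ u ^ (1/(2*c) - 1) := le_trans i1 i2
          _ = (n:ℝ) * u ^ (1/(2*c)) := e3
          _ ≤ (n:ℝ) * (Real.log n/(n:ℝ)) ^ (1/(2*c)) :=
              mul_le_mul_of_nonneg_left i3 hn0.le
    _ = (n:ℝ) * (Real.log n/(n:ℝ)) ^ (1/(2*c)) * (Real.log N/(N:ℝ)) ^ ((1:ℝ)/2) := by
        ring


set_option maxHeartbeats 1000000 in
/-- Proposition 2.9, uniform correlation bound in the weakly dependent
case `m ≥ 2n`. -/
theorem correlation_bound_weakly_dependent_far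
    {Ω : Type*} [MeasurableSpace Ω] (P : Measure Ω) [IsProbabilityMeasure P]
    (b : ℕ → Ω → ℕ) (hmeas : ∀ i, Measurable (b i))
    (hindep : iIndepFun b P)
    (h0 : ∀ i, P {ω | b i ω = 0} = 1/2) (h1 : ∀ i, P {ω | b i ω = 1} = 1/2)
    (B : ℕ → Ω → ℕ) (hB : ∀ n ω, B n ω = ∑ i ∈ Finset.range n, b (i + 1) ω)
    -- the correlation function `Δ((d,n),(δ,m))`
    (Δ : ℕ → ℕ → ℕ → ℕ → ℝ)
    (hΔ : ∀ d δ n m, Δ d n δ m =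
      (P {ω | d ∣ B n ω ∧ δ ∣ B m ω}).toReal
        - (P {ω | d ∣ B n ω}).toReal * (P {ω | δ ∣ B m ω}).toReal)
    (c α α' δ₀ : ℝ) (hc0 : 0 < c) (hc1 : c < 1)
    (hα' : max (3/2) (1/c) < α') (hαα' : α' < α) (hδ₀ : Real.sqrt 2 < δ₀) :
    ∃ (C : ℝ) (n₀ : ℕ), ∀ n m : ℕ, n₀ ≤ n → 2 * n ≤ m →
      ∀ d δ : ℕ, 0 < d → 0 < δ →
        (d : ℝ) < Real.pi / Real.sqrt (2 * α) * Real.sqrt ((n : ℝ) / Real.log n) →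
        (δ : ℝ) < Real.pi / (δ₀ * Real.sqrt (2 * α)) * Real.sqrt ((m : ℝ) / Real.log m) →
        |Δ d n δ m| ≤
          C * (n : ℝ) * (Real.log n / (n : ℝ)) ^ (1 / (2 * c))
            * (Real.log ((m - n : ℕ) : ℝ) / ((m - n : ℕ) : ℝ)) ^ ((1:ℝ)/2) := by
  classical
  refine ⟨2, 3, fun n m hn hm d δ hd hδpos hdlt hδlt => ?_⟩
  -- basic facts
  have hα32 : (3/2 : ℝ) < α := lt_trans (lt_of_le_of_lt (le_max_left _ _) hα') hαα'
  have hα1c : 1/c < α := lt_trans (lt_of_le_of_lt (le_max_right _ _) hα') hαα'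
  have hαpos : (0:ℝ) < α := by linarith
  have hδ₀pos : (0:ℝ) < δ₀ := lt_of_le_of_lt (Real.sqrt_nonneg 2) hδ₀
  have hδ₀sq : (2:ℝ) ≤ δ₀^2 := by
    nlinarith [Real.sq_sqrt (by norm_num : (0:ℝ) ≤ 2), Real.sqrt_nonneg 2]
  have hn3 : 3 ≤ n := hn
  have hm6 : 6 ≤ m := by omega
  have hnm : n ≤ m := by omega
  set N := m - n with hN
  have hnN : n ≤ N := by omega
  have h3N : 3 ≤ N := by omega
  have hNR : ((N:ℕ):ℝ) = (m:ℝ) - n := by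
    rw [hN, Nat.cast_sub hnm]
  -- the two block sums
  set S : Ω → ℕ := fun ω => ∑ i ∈ Finset.Ico 1 (n+1), b i ω with hS
  set T : Ω → ℕ := fun ω => ∑ i ∈ Finset.Ico (n+1) (m+1), b i ω with hT
  have hSmeas : Measurable S := Finset.measurable_sum _ fun i _ => hmeas i
  have hTmeas : Measurable T := Finset.measurable_sum _ fun i _ => hmeas i
  have hST : IndepFun S T P := indep_block_sums P b hmeas hindep 1 (n+1) (m+1)
  have hSB : ∀ ω, B n ω = S ω := by
    intro ω
    rw [hB n ω]
    show _ = ∑ i ∈ Finset.Ico 1 (n+1), b i ω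
    rw [Finset.sum_Ico_eq_sum_range]
    simp only [Nat.add_sub_cancel]
    exact Finset.sum_congr rfl fun i _ => by rw [Nat.add_comm]
  have hTB : ∀ ω, B m ω = S ω + T ω := by
    intro ω
    rw [hB m ω]
    show _ = (∑ i ∈ Finset.Ico 1 (n+1), b i ω) + ∑ i ∈ Finset.Ico (n+1) (m+1), b i ω
    rw [Finset.sum_Ico_consecutive (fun i => b i ω) (by omega : 1 ≤ n+1) (by omega : n+1 ≤ m+1)]
    rw [Finset.sum_Ico_eq_sum_range]
    simp only [Nat.add_sub_cancel]
    exact Finset.sum_congr rfl fun i _ => by rw [Nat.add_comm]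
  -- laws
  have hlawS : ∀ k, P (S ⁻¹' {k}) = ((n.choose k : ℕ) : ENNReal) * 2⁻¹ ^ n := by
    intro k
    have := bern_sum_law P b hmeas hindep h0 h1 (Finset.Ico 1 (n+1)) k
    simpa [Nat.card_Ico] using this
  have hlawT : ∀ t, P (T ⁻¹' {t}) = ((N.choose t : ℕ) : ENNReal) * 2⁻¹ ^ N := by
    intro t
    have := bern_sum_law P b hmeas hindep h0 h1 (Finset.Ico (n+1) (m+1)) t
    have hcard : (Finset.Ico (n+1) (m+1)).card = N := by
      rw [Nat.card_Ico]; omega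
    rw [hcard] at this
    exact this
  -- q values
  set qE : ℕ → ENNReal := fun k => P (T ⁻¹' {t | δ ∣ k + t}) with hqEdef
  have hfin : ∀ t : ℕ, ((N.choose t : ℕ) : ENNReal) * 2⁻¹ ^ N ≠ ⊤ :=
    fun t => ENNReal.mul_ne_top (ENNReal.natCast_ne_top _)
      (ENNReal.pow_ne_top (by simp))
  have hqE : ∀ k, qE k = ∑ t ∈ Finset.range (N+1),
      (if δ ∣ k + t then ((N.choose t : ℕ) : ENNReal) * 2⁻¹ ^ N else 0) := by
    intro k
    show P (T ⁻¹' {t | δ ∣ k + t}) = _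
    rw [measure_preimage_nat P T hTmeas]
    rw [tsum_eq_sum (s := Finset.range (N+1)) ?_]
    · refine Finset.sum_congr rfl fun t _ => ?_
      rw [Set.indicator_apply]
      by_cases hdt : δ ∣ k + t
      · rw [if_pos hdt, if_pos (by exact hdt), hlawT t]
      · rw [if_neg hdt, if_neg (by exact hdt)]
    · intro t ht
      rw [Finset.mem_range, not_lt] at ht
      rw [Set.indicator_apply]
      split_ifs
      · rw [hlawT t, Nat.choose_eq_zero_of_lt (by omega), Nat.cast_zero, zero_mul]
      · rfl
  -- real versions
  set pr : ℕ → ℝ := fun k => (n.choose k : ℝ) * 2⁻¹ ^ n with hprdef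
  set rq : ℕ → ℝ := fun k => (qE k).toReal with hrqdef
  have hrq : ∀ k, rq k = ∑ t ∈ Finset.range (N+1),
      (if δ ∣ k + t then ((N.choose t : ℝ) * 2⁻¹ ^ N) else 0) := by
    intro k
    show (qE k).toReal = _
    rw [hqE k, ENNReal.toReal_sum (fun t _ => by split_ifs; exacts [hfin t, (by simp)])]
    refine Finset.sum_congr rfl fun t _ => ?_
    rw [apply_ite ENNReal.toReal, ENNReal.toReal_mul, ENNReal.toReal_pow, ENNReal.toReal_inv]
    simp
  have hpr0 : ∀ k, 0 ≤ pr k := fun k => by positivity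
  have hprsum : ∑ k ∈ Finset.range (n+1), pr k = 1 := by
    show ∑ k ∈ Finset.range (n+1), ((n.choose k : ℝ) * 2⁻¹ ^ n) = 1
    rw [← Finset.sum_mul]
    rw [show ∑ k ∈ Finset.range (n+1), (n.choose k : ℝ) = ((2:ℝ))^n by
      rw [← Nat.cast_sum]
      rw [Nat.sum_range_choose]
      push_cast
      ring]
    rw [inv_pow]
    rw [mul_inv_cancel₀ (by positivity)]
  -- measure computations
  have hfinS : ∀ k, P (S ⁻¹' {k}) ≠ ⊤ := fun k => measure_ne_top _ _
  have hvanish : ∀ k ∉ Finset.range (n+1), P (S ⁻¹' {k}) = 0 := by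
    intro k hk
    rw [Finset.mem_range, not_lt] at hk
    rw [hlawS k, Nat.choose_eq_zero_of_lt (by omega), Nat.cast_zero, zero_mul]
  have hprS : ∀ k, (P (S ⁻¹' {k})).toReal = pr k := by
    intro k
    rw [hlawS k, ENNReal.toReal_mul, ENNReal.toReal_pow, ENNReal.toReal_inv]
    show _ = (n.choose k : ℝ) * 2⁻¹ ^ n
    simp
  -- joint probability
  have hinner : ∀ k, P (T ⁻¹' {t | d ∣ k ∧ δ ∣ (k+t)}) = if d ∣ k then qE k else 0 := by
    intro k
    by_cases hdk : d ∣ k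
    · rw [if_pos hdk, hqEdef]
      congr 1
      ext t
      simp [hdk]
    · rw [if_neg hdk]
      have he : {t : ℕ | d ∣ k ∧ δ ∣ (k+t)} = ∅ := by
        ext t; simp [hdk]
      rw [he]
      simp
  have hjoint : (P {ω | d ∣ B n ω ∧ δ ∣ B m ω}).toReal
      = ∑ k ∈ Finset.range (n+1), (if d ∣ k then pr k * rq k else 0) := by
    have hev : {ω | d ∣ B n ω ∧ δ ∣ B m ω}
        = {ω | (fun k t => d ∣ k ∧ δ ∣ (k + t)) (S ω) (T ω)} := by
      ext ω
      simp only [Set.mem_setOf_eq, hSB ω, hTB ω]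
    rw [hev, measure_joint P S T hSmeas hTmeas hST (fun k t => d ∣ k ∧ δ ∣ (k + t))]
    rw [tsum_eq_sum (s := Finset.range (n+1))
      (fun k hk => by rw [hvanish k hk, zero_mul])]
    rw [ENNReal.toReal_sum (fun k _ => ENNReal.mul_ne_top (hfinS k) (measure_ne_top _ _))]
    refine Finset.sum_congr rfl fun k _ => ?_
    rw [show P (T ⁻¹' {t | d ∣ k ∧ δ ∣ (k+t)}) = if d ∣ k then qE k else 0 from hinner k]
    by_cases hdk : d ∣ k
    · rw [if_pos hdk, if_pos hdk, ENNReal.toReal_mul, hprS k]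
    · rw [if_neg hdk, if_neg hdk, mul_zero, ENNReal.toReal_zero]
  have hmargn : (P {ω | d ∣ B n ω}).toReal
      = ∑ k ∈ Finset.range (n+1), (if d ∣ k then pr k else 0) := by
    have hev : {ω | d ∣ B n ω} = {ω | (fun k (_ : ℕ) => d ∣ k) (S ω) (T ω)} := by
      ext ω
      simp only [Set.mem_setOf_eq, hSB ω]
    rw [hev, measure_joint P S T hSmeas hTmeas hST (fun k _ => d ∣ k)]
    rw [tsum_eq_sum (s := Finset.range (n+1))
      (fun k hk => by rw [hvanish k hk, zero_mul])]
    rw [ENNReal.toReal_sum (fun k _ => ENNReal.mul_ne_top (hfinS k) (measure_ne_top _ _))]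
    refine Finset.sum_congr rfl fun k _ => ?_
    by_cases hdk : d ∣ k
    · have : {t : ℕ | d ∣ k} = Set.univ := by ext t; simp [hdk]
      rw [this, if_pos hdk]
      simp only [Set.preimage_univ, measure_univ, mul_one]
      exact hprS k
    · have : {t : ℕ | d ∣ k} = ∅ := by ext t; simp [hdk]
      rw [this, if_neg hdk]
      simp
  have hmargm : (P {ω | δ ∣ B m ω}).toReal
      = ∑ k ∈ Finset.range (n+1), pr k * rq k := by
    have hev : {ω | δ ∣ B m ω} = {ω | (fun k t => δ ∣ (k + t)) (S ω) (T ω)} := by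
      ext ω
      simp only [Set.mem_setOf_eq, hTB ω]
    rw [hev, measure_joint P S T hSmeas hTmeas hST (fun k t => δ ∣ (k + t))]
    rw [tsum_eq_sum (s := Finset.range (n+1))
      (fun k hk => by rw [hvanish k hk, zero_mul])]
    rw [ENNReal.toReal_sum (fun k _ => ENNReal.mul_ne_top (hfinS k) (measure_ne_top _ _))]
    refine Finset.sum_congr rfl fun k _ => ?_
    rw [ENNReal.toReal_mul, hprS k]
  -- the epsilon
  set ε₀ : ℝ := if δ = 1 then 0 else Real.cos (π/δ) ^ N with hε₀def
  have hcosnn : δ ≠ 1 → (0:ℝ) ≤ Real.cos (π/δ) := by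
    intro hδ1
    have hδ2 : 2 ≤ δ := by omega
    apply Real.cos_nonneg_of_mem_Icc
    constructor
    · have : (0:ℝ) ≤ π/δ := by positivity
      linarith [Real.pi_pos]
    · rw [div_le_div_iff₀ (by positivity) (by norm_num : (0:ℝ) < 2)]
      have : (2:ℝ) ≤ δ := by exact_mod_cast hδ2
      nlinarith [Real.pi_pos]
  have hε₀nn : 0 ≤ ε₀ := by
    rw [hε₀def]
    split_ifs with h
    · exact le_rfl
    · exact pow_nonneg (hcosnn h) N
  have hqnear : ∀ k ∈ Finset.range (n+1), |rq k - 1/(δ:ℝ)| ≤ ε₀ := by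
    intro k _
    rw [hrq k, hε₀def]
    by_cases h1δ : δ = 1
    · subst h1δ
      rw [if_pos rfl]
      have hall : ∀ t, (if (1:ℕ) ∣ k + t then ((N.choose t:ℝ) * 2⁻¹^N) else 0)
          = (N.choose t:ℝ) * 2⁻¹^N := fun t => if_pos (one_dvd _)
      simp only [hall]
      rw [← Finset.sum_mul]
      rw [show ∑ t ∈ Finset.range (N+1), (N.choose t : ℝ) = ((2:ℝ))^N by
        rw [← Nat.cast_sum, Nat.sum_range_choose]; push_cast; ring]
      rw [inv_pow, mul_inv_cancel₀ (by positivity)]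
      norm_num
    · rw [if_neg h1δ]
      exact fourier_bound δ N k (by omega)
  -- conclude correlation bound
  have hΔbound : |Δ d n δ m| ≤ 2 * ε₀ := by
    rw [hΔ d δ n m, hjoint, hmargn, hmargm]
    exact corr_alg (Finset.range (n+1)) pr rq (fun k => d ∣ k) (1/(δ:ℝ)) ε₀
      hε₀nn hpr0 hqnear hprsum
  -- analytic estimates
  have hnR : (3:ℝ) ≤ (n:ℝ) := by exact_mod_cast hn3
  have hmR : (6:ℝ) ≤ (m:ℝ) := by exact_mod_cast hm6
  have hNR3 : (3:ℝ) ≤ (N:ℝ) := by exact_mod_cast h3N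
  have hn0 : (0:ℝ) < n := by linarith
  have hm0 : (0:ℝ) < m := by linarith
  have hN0 : (0:ℝ) < N := by linarith
  have hexp3 : Real.exp 1 ≤ 3 := by
    have := Real.exp_one_lt_d9
    linarith
  have hlogn1 : 1 ≤ Real.log n := (Real.le_log_iff_exp_le hn0).2 (by linarith)
  have hlogm1 : 1 ≤ Real.log m := (Real.le_log_iff_exp_le hm0).2 (by linarith)
  have hlogN1 : 1 ≤ Real.log N := (Real.le_log_iff_exp_le hN0).2 (by linarith)
  have h2c0 : (0:ℝ) < 1/(2*c) := by positivity
  have hNm : (N:ℝ) ≤ m := by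
    rw [hNR]; linarith
  have hNhalf : (m:ℝ)/2 ≤ (N:ℝ) := by
    have : (2:ℝ) * n ≤ m := by exact_mod_cast hm
    rw [hNR]; linarith
  -- step A: ε₀ ≤ m ^ (-(α/2))
  have hstepA : ε₀ ≤ (m:ℝ) ^ (-(α/2)) := by
    rw [hε₀def]
    split_ifs with h1δ
    · exact (Real.rpow_pos_of_pos hm0 _).le
    · have hδ2 : 2 ≤ δ := by omega
      have hδR : (0:ℝ) < δ := by exact_mod_cast hδpos
      have hδR2 : (2:ℝ) ≤ δ := by exact_mod_cast hδ2
      set x : ℝ := π/δ with hxdef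
      have hx0 : 0 ≤ x := by positivity
      have hx2 : x ≤ π/2 := by
        rw [hxdef]
        apply div_le_div_of_nonneg_left Real.pi_pos.le (by norm_num) hδR2
      have hcosq : Real.cos x ≤ 1 - x^2/4 := cos_quarter hx0 hx2
      have h1x : 0 ≤ 1 - x^2/4 := le_trans (hcosnn h1δ) hcosq
      have hexp1 : (1 - x^2/4) ≤ Real.exp (-(x^2/4)) := by
        have := Real.add_one_le_exp (-(x^2/4))
        linarith
      have hchain1 : Real.cos x ^ N ≤ Real.exp (-(x^2/4)) ^ N :=
        le_trans (pow_le_pow_left₀ (hcosnn h1δ) hcosq N)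
          (pow_le_pow_left₀ h1x hexp1 N)
      have hchain2 : Real.exp (-(x^2/4)) ^ N = Real.exp (-((N:ℝ) * (x^2/4))) := by
        rw [← Real.exp_nat_mul]
        ring_nf
      have hkey : (α/2) * Real.log m ≤ (N:ℝ) * (x^2/4) := by
        rw [hxdef]
        exact exponent_key hαpos hδ₀sq hδ₀pos hδR hlogm1 hm0 hNhalf hδlt
      calc Real.cos x ^ N ≤ Real.exp (-((N:ℝ) * (x^2/4))) := hchain2 ▸ hchain1
        _ ≤ Real.exp (-((α/2) * Real.log m)) := by
            apply Real.exp_le_exp.2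
            linarith
        _ = (m:ℝ) ^ (-(α/2)) := by
            rw [Real.rpow_def_of_pos hm0]
            congr 1
            ring
  -- step B
  have hstepB : (m:ℝ) ^ (-(α/2))
      ≤ (n:ℝ) * (Real.log n/(n:ℝ)) ^ (1/(2*c)) * (Real.log N/(N:ℝ)) ^ ((1:ℝ)/2) :=
    final_compare hc0 hα32 hα1c (by linarith) hn0 hm0 hN0 (by exact_mod_cast hnm) hNm
      hlogn1 hlogN1
  calc |Δ d n δ m| ≤ 2 * ε₀ := hΔbound
    _ ≤ 2 * ((m:ℝ) ^ (-(α/2))) := by linarith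
    _ ≤ 2 * ((n:ℝ) * (Real.log n/(n:ℝ)) ^ (1/(2*c)) * (Real.log N/(N:ℝ)) ^ ((1:ℝ)/2)) := by
        linarith
    _ = 2 * (n:ℝ) * (Real.log n/(n:ℝ)) ^ (1/(2*c)) * (Real.log N/(N:ℝ)) ^ ((1:ℝ)/2) := by
        ring
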